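/- Let U be a finite set partitioned into pairwise disjoint subsets U₁, …, Uₙ with U = U₁ ∪ ⋯ ∪ Uₙ, and let 𝒰 be a finite family of subsets of U partitioned into pairwise disjoint subfamilies 𝒰₁, …, 𝒰ₙ with 𝒰 = 𝒰₁ ∪ ⋯ ∪ 𝒰ₙ, such that every A ∈ 𝒰ᵢ satisfies A ⊆ Uᵢ. Then the number of exact covers of U by 𝒰 equals the product, over i from 1 to n, of the number of exact covers of Uᵢ by 𝒰ᵢ. -/
import Mathlib

/-- `S` is an exact cover of `U` by the family `𝒰`: `S ⊆ 𝒰`, the members of `S` are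
pairwise disjoint, and their union is `U`. -/
def IsExactCover {α : Type*} [DecidableEq α] (U : Finset α) (𝒰 : Finset (Finset α))
    (S : Finset (Finset α)) : Prop :=
  S ⊆ 𝒰 ∧ (S : Set (Finset α)).Pairwise Disjoint ∧ S.sup id = U

theorem ncard_exactCovers_eq_prod
    {α : Type*} [DecidableEq α] (n : ℕ)
    (U : Finset α) (𝒰 : Finset (Finset α))
    (Upart : Fin n → Finset α) (Fpart : Fin n → Finset (Finset α))
    (hUdisj : ∀ i j, i ≠ j → Disjoint (Upart i) (Upart j))
    (hU : U = Finset.univ.sup Upart)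
    (hFdisj : ∀ i j, i ≠ j → Disjoint (Fpart i) (Fpart j))
    (hF : 𝒰 = Finset.univ.sup Fpart)
    (hsub : ∀ i, ∀ A ∈ Fpart i, A ⊆ Upart i) :
    {S | IsExactCover U 𝒰 S}.ncard =
      ∏ i, {S | IsExactCover (Upart i) (Fpart i) S}.ncard := by
  classical
  -- unique index for each member of 𝒰
  have uniq : ∀ A ∈ 𝒰, ∃ i, A ∈ Fpart i ∧ ∀ j, A ∈ Fpart j → j = i := by
    intro A hA
    rw [hF, Finset.mem_sup] at hA
    obtain ⟨i, -, hi⟩ := hA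
    refine ⟨i, hi, fun j hj => ?_⟩
    by_contra hne
    exact (Finset.disjoint_left.mp (hFdisj j i hne) hj) hi
  set F : Finset (Finset (Finset α)) := 𝒰.powerset.filter (IsExactCover U 𝒰) with hFdef
  set E : Fin n → Finset (Finset (Finset α)) :=
    fun i => (Fpart i).powerset.filter (IsExactCover (Upart i) (Fpart i)) with hEdef
  have memF : ∀ S, S ∈ F ↔ IsExactCover U 𝒰 S := by
    intro S
    simp only [hFdef, Finset.mem_filter, Finset.mem_powerset, and_iff_right_iff_imp]
    exact fun h => h.1
  have memE : ∀ i S, S ∈ E i ↔ IsExactCover (Upart i) (Fpart i) S := by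
    intro i S
    simp only [hEdef, Finset.mem_filter, Finset.mem_powerset, and_iff_right_iff_imp]
    exact fun h => h.1
  have h1 : {S | IsExactCover U 𝒰 S} = ↑F := by
    ext S; simp [memF]
  have h2 : ∀ i, {S | IsExactCover (Upart i) (Fpart i) S} = ↑(E i) := by
    intro i; ext S; simp [memE]
  rw [h1, Set.ncard_coe_finset]
  simp_rw [h2, Set.ncard_coe_finset]
  rw [← Fintype.card_piFinset]
  apply Finset.card_bij (fun S _ => fun i => S ∩ Fpart i)
  · -- maps into piFinset
    intro S hS
    rw [memF] at hS
    obtain ⟨hsub𝒰, hpair, hsup⟩ := hS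
    rw [Fintype.mem_piFinset]
    intro i
    rw [memE]
    refine ⟨Finset.inter_subset_right, ?_, ?_⟩
    · exact hpair.mono (fun x hx => by
        simp only [Finset.coe_inter, Set.mem_inter_iff, Finset.mem_coe] at hx
        exact hx.1)
    · ext x
      rw [Finset.mem_sup]
      constructor
      · rintro ⟨A, hA, hx⟩
        exact hsub i A (Finset.mem_inter.mp hA).2 hx
      · intro hx
        have hxU : x ∈ U := by
          rw [hU, Finset.mem_sup]; exact ⟨i, Finset.mem_univ i, hx⟩
        rw [← hsup, Finset.mem_sup] at hxU
        obtain ⟨A, hAS, hxA⟩ := hxU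
        obtain ⟨j, hj, -⟩ := uniq A (hsub𝒰 hAS)
        have : j = i := by
          by_contra hne
          exact (Finset.disjoint_left.mp (hUdisj j i hne) (hsub j A hj hxA)) hx
        subst this
        exact ⟨A, Finset.mem_inter.mpr ⟨hAS, hj⟩, hxA⟩
  · -- injective
    intro S hS T hT h
    rw [memF] at hS hT
    ext A
    constructor
    · intro hA
      obtain ⟨i, hi, -⟩ := uniq A (hS.1 hA)
      have : A ∈ T ∩ Fpart i := by
        rw [← congrFun h i]; exact Finset.mem_inter.mpr ⟨hA, hi⟩
      exact (Finset.mem_inter.mp this).1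
    · intro hA
      obtain ⟨i, hi, -⟩ := uniq A (hT.1 hA)
      have : A ∈ S ∩ Fpart i := by
        rw [congrFun h i]; exact Finset.mem_inter.mpr ⟨hA, hi⟩
      exact (Finset.mem_inter.mp this).1
  · -- surjective
    intro f hf
    rw [Fintype.mem_piFinset] at hf
    have hf' : ∀ i, IsExactCover (Upart i) (Fpart i) (f i) := fun i => (memE i (f i)).mp (hf i)
    refine ⟨Finset.univ.sup f, ?_, ?_⟩
    · rw [memF]
      refine ⟨?_, ?_, ?_⟩
      · intro A hA
        rw [Finset.mem_sup] at hA
        obtain ⟨i, -, hi⟩ := hA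
        rw [hF, Finset.mem_sup]
        exact ⟨i, Finset.mem_univ i, (hf' i).1 hi⟩
      · intro A hA B hB hne
        rw [Finset.mem_coe, Finset.mem_sup] at hA hB
        obtain ⟨i, -, hi⟩ := hA
        obtain ⟨j, -, hj⟩ := hB
        by_cases hij : i = j
        · subst hij
          exact (hf' i).2.1 hi hj hne
        · exact (hUdisj i j hij).mono (hsub i A ((hf' i).1 hi)) (hsub j B ((hf' j).1 hj))
      · ext x
        rw [Finset.mem_sup, hU, Finset.mem_sup]
        constructor
        · rintro ⟨A, hA, hx⟩
          rw [Finset.mem_sup] at hA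
          obtain ⟨i, -, hi⟩ := hA
          refine ⟨i, Finset.mem_univ i, ?_⟩
          rw [← (hf' i).2.2, Finset.mem_sup]
          exact ⟨A, hi, hx⟩
        · rintro ⟨i, -, hx⟩
          rw [← (hf' i).2.2, Finset.mem_sup] at hx
          obtain ⟨A, hA, hx⟩ := hx
          refine ⟨A, ?_, hx⟩
          rw [Finset.mem_sup]
          exact ⟨i, Finset.mem_univ i, hA⟩
    · funext i
      ext A
      rw [Finset.mem_inter, Finset.mem_sup]
      constructor
      · rintro ⟨⟨j, -, hj⟩, hi⟩
        have hji : j = i := by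
          by_contra hne
          exact (Finset.disjoint_left.mp (hFdisj j i hne) ((hf' j).1 hj)) hi
        subst hji
        exact hj
      · intro hA
        exact ⟨⟨i, Finset.mem_univ i, hA⟩, (hf' i).1 hA⟩
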